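/- Let v = (v₁, v₂) and w = (w₁, w₂) be vectors in ℤ × ℤ with v₁·w₂ − v₂·w₁ ≠ 0. Let f, g : ℝ → ℝ × ℝ be continuous maps satisfying f(s + 1) = f(s) + v for all s ∈ ℝ and g(t + 1) = g(t) + w for all t ∈ ℝ. Then there exist s, t ∈ ℝ such that f(s) − g(t) ∈ ℤ × ℤ. -/

import Mathlib

open Complex Finset Set

section TorusIntersectionAux

lemma aux_const_of_int (W : ℝ → ℝ) (hW : Continuous W)
    (hint : ∀ s : ℝ, ∃ m : ℤ, W s = 2 * Real.pi * m) : W 0 = W 1 := by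
  by_contra hne
  obtain ⟨m0, h0⟩ := hint 0
  obtain ⟨m1, h1⟩ := hint 1
  have hpi := Real.pi_pos
  have key : ∀ y : ℝ, y ∈ Set.Icc (W 0) (W 1) ∪ Set.Icc (W 1) (W 0) → ∃ m : ℤ, y = 2 * Real.pi * m := by
    intro y hy
    rcases hy with hy | hy
    · obtain ⟨s, _, hs⟩ := intermediate_value_Icc (zero_le_one) hW.continuousOn hy
      obtain ⟨m, hm⟩ := hint s
      exact ⟨m, by rw [← hs, hm]⟩
    · obtain ⟨s, _, hs⟩ := intermediate_value_Icc' (zero_le_one) hW.continuousOn hy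
      obtain ⟨m, hm⟩ := hint s
      exact ⟨m, by rw [← hs, hm]⟩
  rcases lt_or_gt_of_ne hne with h | h
  · have hmlt : (m0 : ℝ) < m1 := by nlinarith
    have hmle : (m0 : ℝ) + 1 ≤ m1 := by exact_mod_cast (by exact_mod_cast hmlt : m0 < m1)
    obtain ⟨m, hm⟩ := key (2 * Real.pi * m0 + Real.pi)
      (Or.inl ⟨by nlinarith, by nlinarith⟩)
    have : Real.pi * (2 * (m : ℝ) - 2 * m0 - 1) = 0 := by nlinarith
    have h2 : (2 * (m : ℝ) - 2 * m0 - 1) = 0 := by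
      rcases mul_eq_zero.mp this with h | h
      · exact absurd h (ne_of_gt hpi)
      · exact h
    have : ((2 * m - 2 * m0 - 1 : ℤ) : ℝ) = 0 := by push_cast; linarith
    have := Int.cast_injective (α := ℝ) (this.trans (Int.cast_zero).symm)
    omega
  · have hmlt : (m1 : ℝ) < m0 := by nlinarith
    have hmle : (m1 : ℝ) + 1 ≤ m0 := by exact_mod_cast (by exact_mod_cast hmlt : m1 < m0)
    obtain ⟨m, hm⟩ := key (2 * Real.pi * m1 + Real.pi)
      (Or.inr ⟨by nlinarith, by nlinarith⟩)
    have : Real.pi * (2 * (m : ℝ) - 2 * m1 - 1) = 0 := by nlinarith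
    have h2 : (2 * (m : ℝ) - 2 * m1 - 1) = 0 := by
      rcases mul_eq_zero.mp this with h | h
      · exact absurd h (ne_of_gt hpi)
      · exact h
    have : ((2 * m - 2 * m1 - 1 : ℤ) : ℝ) = 0 := by push_cast; linarith
    have := Int.cast_injective (α := ℝ) (this.trans (Int.cast_zero).symm)
    omega

lemma aux_telescope (z : ℕ → ℂ) (hz : ∀ k, z k ≠ 0) (n : ℕ) :
    (∏ k ∈ range n, (z (k + 1) / z k)) = z n / z 0 := by
  induction n with
  | zero => rw [Finset.prod_range_zero, div_self (hz 0)]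
  | succ n ih =>
    rw [Finset.prod_range_succ, ih, div_mul_div_comm, mul_comm (z 0) (z n)]
    exact mul_div_mul_left _ _ (hz n)

lemma aux_sum_arg_int (n : ℕ) (z : ℕ → ℂ) (hz : ∀ k, z k ≠ 0) (hloop : z n = z 0) :
    ∃ m : ℤ, (∑ k ∈ range n, arg (z (k + 1) / z k)) = 2 * Real.pi * m := by
  have hr : ∀ k, z (k+1) / z k ≠ 0 := fun k => div_ne_zero (hz _) (hz _)
  have hexp : Complex.exp ((∑ k ∈ range n, arg (z (k + 1) / z k) : ℝ) * I) = 1 := by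
    push_cast
    rw [Finset.sum_mul, Complex.exp_sum]
    have : ∀ k ∈ range n, Complex.exp ((arg (z (k+1) / z k) : ℝ) * I)
        = (z (k+1) / z k) / ((‖z (k+1) / z k‖ : ℝ) : ℂ) := by
      intro k _
      rw [eq_div_iff (by exact_mod_cast (norm_ne_zero_iff.mpr (hr k)))]
      rw [mul_comm]
      exact Complex.norm_mul_exp_arg_mul_I _
    rw [Finset.prod_congr rfl this, Finset.prod_div_distrib]
    rw [aux_telescope z hz n, hloop, div_self (hz 0)]
    rw [← Complex.ofReal_prod]
    have : (∏ k ∈ range n, ‖z (k+1) / z k‖) = 1 := by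
      rw [← norm_prod, aux_telescope z hz n, hloop, div_self (hz 0), norm_one]
    rw [this]
    simp
  obtain ⟨m, hm⟩ := Complex.exp_eq_one_iff.mp hexp
  refine ⟨m, ?_⟩
  have : ((∑ k ∈ range n, arg (z (k + 1) / z k) : ℝ) : ℂ) = 2 * Real.pi * m := by
    have hI : (I : ℂ) ≠ 0 := Complex.I_ne_zero
    have hm' : ((∑ k ∈ range n, arg (z (k + 1) / z k) : ℝ) : ℂ) * I
        = ((m : ℂ) * (2 * Real.pi)) * I := by push_cast; push_cast at hm; linear_combination hm
    have := mul_right_cancel₀ hI hm'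
    push_cast at this ⊢
    linear_combination this
  exact_mod_cast this

lemma aux_winding_eq (Γ : ℝ × ℝ → ℂ) (hc : Continuous Γ)
    (h0 : ∀ s ∈ Set.Icc (0:ℝ) 1, ∀ t : ℝ, Γ (s, t) ≠ 0)
    (hper : ∀ s t, Γ (s, t + 1) = Γ (s, t)) :
    ∃ N : ℕ, ∀ n : ℕ, N ≤ n →
      (∑ k ∈ range n, arg (Γ (0, ((k:ℝ)+1)/n) / Γ (0, (k:ℝ)/n)))
        = ∑ k ∈ range n, arg (Γ (1, ((k:ℝ)+1)/n) / Γ (1, (k:ℝ)/n)) := by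
  classical
  set K : Set (ℝ × ℝ) := Set.Icc (0:ℝ) 1 ×ˢ Set.Icc (0:ℝ) 1 with hK
  have hKc : IsCompact K := isCompact_Icc.prod isCompact_Icc
  have hKne : K.Nonempty := ⟨(0,0), by constructor <;> constructor <;> norm_num⟩
  obtain ⟨p₀, hp₀, hmin⟩ := hKc.exists_isMinOn hKne
    (continuous_norm.comp hc).continuousOn
  set ε : ℝ := ‖Γ p₀‖ with hεdef
  have hΓp₀ : Γ p₀ ≠ 0 := by
    have := h0 p₀.1 hp₀.1 p₀.2; rwa [Prod.mk.eta] at this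
  have hε : 0 < ε := norm_pos_iff.mpr hΓp₀
  have hu := hKc.uniformContinuousOn_of_continuous hc.continuousOn
  rw [Metric.uniformContinuousOn_iff] at hu
  obtain ⟨δ, hδ, hδ'⟩ := hu ε hε
  refine ⟨⌈1/δ⌉₊ + 1, fun n hn => ?_⟩
  have hn0 : 0 < n := lt_of_lt_of_le (Nat.succ_pos _) hn
  have hn0' : (0:ℝ) < n := by exact_mod_cast hn0
  have hceil : ((⌈1/δ⌉₊ : ℕ) : ℝ) + 1 ≤ n := by exact_mod_cast hn
  have h1δ : 1/δ < (n:ℝ) := lt_of_le_of_lt (Nat.le_ceil _) (by linarith)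
  have hstep : 1/(n:ℝ) < δ := by
    rw [div_lt_iff₀ hn0']
    rw [div_lt_iff₀ hδ] at h1δ
    linarith [mul_comm δ (n:ℝ)]
  -- clamp
  set c : ℝ → ℝ := fun s => max 0 (min 1 s) with hcdef
  have hcc : Continuous c := continuous_const.max (continuous_const.min continuous_id)
  have hcm : ∀ s, c s ∈ Set.Icc (0:ℝ) 1 := fun s =>
    ⟨le_max_left _ _, max_le (by norm_num) (min_le_left _ _)⟩
  have hmemK : ∀ (s : ℝ) (k : ℕ), k ≤ n → ((c s, (k:ℝ)/n) ∈ K) := by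
    intro s k hk
    refine ⟨hcm s, ⟨by positivity, ?_⟩⟩
    rw [div_le_one hn0']
    exact_mod_cast hk
  have hne : ∀ (s : ℝ) (k : ℕ), k ≤ n → Γ (c s, (k:ℝ)/n) ≠ 0 :=
    fun s k _ => h0 (c s) (hcm s) _
  have hratio : ∀ (s : ℝ) (k : ℕ), k < n →
      ‖Γ (c s, ((k:ℝ)+1)/n) / Γ (c s, (k:ℝ)/n) - 1‖ < 1 := by
    intro s k hk
    have hkn : k ≤ n := hk.le
    have hk1n : k + 1 ≤ n := hk
    have hq : ((c s, ((k:ℝ)+1)/n) : ℝ × ℝ) ∈ K := by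
      have := hmemK s (k+1) hk1n; push_cast at this; exact this
    have hp : ((c s, (k:ℝ)/n) : ℝ × ℝ) ∈ K := hmemK s k hkn
    have hdist : dist ((c s, ((k:ℝ)+1)/n) : ℝ × ℝ) ((c s, (k:ℝ)/n) : ℝ × ℝ) < δ := by
      rw [Prod.dist_eq]
      have h1 : dist (c s) (c s) = 0 := dist_self _
      have h2 : dist (((k:ℝ)+1)/n) ((k:ℝ)/n) = 1/(n:ℝ) := by
        rw [Real.dist_eq]
        have : ((k:ℝ)+1)/n - (k:ℝ)/n = 1/n := by ring
        rw [this, abs_of_pos (by positivity)]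
      rw [h1, h2]
      exact max_lt hδ hstep
    have hclose := hδ' _ hq _ hp hdist
    have hpe : Γ (c s, (k:ℝ)/n) ≠ 0 := hne s k hkn
    rw [div_sub_one hpe, norm_div]
    rw [div_lt_one (norm_pos_iff.mpr hpe)]
    calc ‖Γ (c s, ((k:ℝ)+1)/n) - Γ (c s, (k:ℝ)/n)‖
        = dist (Γ (c s, ((k:ℝ)+1)/n)) (Γ (c s, (k:ℝ)/n)) := (Complex.dist_eq _ _).symm
      _ < ε := hclose
      _ ≤ ‖Γ (c s, (k:ℝ)/n)‖ := hmin hp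
  set W : ℝ → ℝ := fun s => ∑ k ∈ range n,
    arg (Γ (c s, ((k:ℝ)+1)/n) / Γ (c s, (k:ℝ)/n)) with hWdef
  have hWc : Continuous W := by
    apply continuous_finset_sum
    intro k hk
    rw [continuous_iff_continuousAt]
    intro s
    have hkn : k < n := Finset.mem_range.mp hk
    have hratCont : ContinuousAt
        (fun s => Γ (c s, ((k:ℝ)+1)/n) / Γ (c s, (k:ℝ)/n)) s := by
      apply ContinuousAt.div
      · exact (hc.comp (hcc.prodMk continuous_const)).continuousAt
      · exact (hc.comp (hcc.prodMk continuous_const)).continuousAt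
      · exact hne s k hkn.le
    have h1 := hratio s k hkn
    have hre : 0 < (Γ (c s, ((k:ℝ)+1)/n) / Γ (c s, (k:ℝ)/n)).re := by
      have h2 : |(Γ (c s, ((k:ℝ)+1)/n) / Γ (c s, (k:ℝ)/n) - 1).re|
          ≤ ‖Γ (c s, ((k:ℝ)+1)/n) / Γ (c s, (k:ℝ)/n) - 1‖ :=
        Complex.abs_re_le_norm _
      have h4 := abs_lt.mp (lt_of_le_of_lt h2 h1)
      have h3 : (Γ (c s, ((k:ℝ)+1)/n) / Γ (c s, (k:ℝ)/n) - 1).re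
          = (Γ (c s, ((k:ℝ)+1)/n) / Γ (c s, (k:ℝ)/n)).re - 1 := by
        simp [Complex.sub_re]
      rw [h3] at h4
      linarith [h4.1]
    exact ContinuousAt.comp (g := arg) (Complex.continuousAt_arg (Or.inl hre)) hratCont
  have hWint : ∀ s : ℝ, ∃ m : ℤ, W s = 2 * Real.pi * m := by
    intro s
    have := aux_sum_arg_int n (fun k => Γ (c s, (k:ℝ)/n))
      (fun k => h0 (c s) (hcm s) _)
      (by
        rw [div_self (ne_of_gt hn0'), Nat.cast_zero, zero_div]
        have := hper (c s) 0
        rw [zero_add] at this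
        exact this)
    obtain ⟨m, hm⟩ := this
    refine ⟨m, ?_⟩
    rw [hWdef]
    rw [← hm]
    apply Finset.sum_congr rfl
    intro k _
    push_cast
    ring_nf
  have hW01 := aux_const_of_int W hWc hWint
  have hc0 : c 0 = 0 := by simp [hcdef]
  have hc1 : c 1 = 1 := by simp [hcdef]
  rw [hWdef] at hW01
  simp only [hc0, hc1] at hW01
  exact hW01

lemma aux_hits_zero (H : ℂ → ℂ) (hc : Continuous H) (M : ℝ)
    (hM : ∀ z, ‖H z - z‖ ≤ M) : ∃ z, H z = 0 := by
  by_contra hcon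
  push_neg at hcon
  have hM0 : 0 ≤ M := le_trans (norm_nonneg _) (hM 0)
  set R : ℝ := M + 1 with hRdef
  have hR : 0 < R := by linarith
  set γ : ℝ → ℂ := fun t => (R:ℂ) * Complex.exp ((2 * Real.pi * t : ℝ) * I) with hγdef
  have hγc : Continuous γ := by
    apply continuous_const.mul
    exact Complex.continuous_exp.comp
      ((Complex.continuous_ofReal.comp (continuous_const.mul continuous_id)).mul
        continuous_const)
  have hγabs : ∀ t, ‖γ t‖ = R := by
    intro t
    rw [hγdef]
    simp only [norm_mul, Complex.norm_exp_ofReal_mul_I, mul_one, Complex.norm_real, Real.norm_eq_abs]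
    exact abs_of_pos hR
  have hγne : ∀ t, γ t ≠ 0 := by
    intro t h
    have := hγabs t
    rw [h, norm_zero] at this
    linarith
  have hγper : ∀ t, γ (t + 1) = γ t := by
    intro t
    rw [hγdef]
    simp only []
    congr 1
    have h1 : ((2 * Real.pi * (t+1) : ℝ) : ℂ) * I
        = ((2 * Real.pi * t : ℝ) : ℂ) * I + 2 * (Real.pi : ℂ) * I := by
      push_cast; ring
    rw [h1, Complex.exp_add, Complex.exp_two_pi_mul_I, mul_one]
  -- first homotopy : from the circle to H ∘ γ
  set Λ₁ : ℝ × ℝ → ℂ := fun p => γ p.2 + (p.1 : ℂ) * (H (γ p.2) - γ p.2) with hΛ₁def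
  have hΛ₁c : Continuous Λ₁ := by
    apply Continuous.add (hγc.comp continuous_snd)
    exact (Complex.continuous_ofReal.comp continuous_fst).mul
      (((hc.comp (hγc.comp continuous_snd))).sub (hγc.comp continuous_snd))
  have hΛ₁0 : ∀ s ∈ Set.Icc (0:ℝ) 1, ∀ t : ℝ, Λ₁ (s, t) ≠ 0 := by
    intro s hs t heq
    rw [hΛ₁def] at heq
    simp only [] at heq
    have h1 : γ t = -((s:ℂ) * (H (γ t) - γ t)) := by linear_combination heq
    have h2 : ‖γ t‖ = |s| * ‖H (γ t) - γ t‖ := by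
      calc ‖γ t‖ = ‖-((s:ℂ) * (H (γ t) - γ t))‖ :=
            congrArg norm h1
        _ = |s| * ‖H (γ t) - γ t‖ := by
            rw [norm_neg, norm_mul, Complex.norm_real, Real.norm_eq_abs]
    have h3 : |s| ≤ 1 := abs_le.mpr ⟨by linarith [hs.1], hs.2⟩
    have h4 := hM (γ t)
    have h5 : ‖H (γ t) - γ t‖ ≥ 0 := norm_nonneg _
    have : R ≤ M := by
      rw [hγabs t] at h2
      calc R = |s| * ‖H (γ t) - γ t‖ := h2
        _ ≤ 1 * M := by
            apply mul_le_mul h3 h4 h5 zero_le_one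
        _ = M := one_mul M
    linarith
  have hΛ₁per : ∀ s t, Λ₁ (s, t + 1) = Λ₁ (s, t) := by
    intro s t; rw [hΛ₁def]; simp only [hγper]
  -- second homotopy : from the constant loop H 0 to H ∘ γ
  set Λ₂ : ℝ × ℝ → ℂ := fun p => H ((p.1 : ℂ) * γ p.2) with hΛ₂def
  have hΛ₂c : Continuous Λ₂ :=
    hc.comp ((Complex.continuous_ofReal.comp continuous_fst).mul (hγc.comp continuous_snd))
  have hΛ₂0 : ∀ s ∈ Set.Icc (0:ℝ) 1, ∀ t : ℝ, Λ₂ (s, t) ≠ 0 := fun s _ t => hcon _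
  have hΛ₂per : ∀ s t, Λ₂ (s, t + 1) = Λ₂ (s, t) := by
    intro s t; rw [hΛ₂def]; simp only [hγper]
  obtain ⟨N₁, hN₁⟩ := aux_winding_eq Λ₁ hΛ₁c hΛ₁0 hΛ₁per
  obtain ⟨N₂, hN₂⟩ := aux_winding_eq Λ₂ hΛ₂c hΛ₂0 hΛ₂per
  set n : ℕ := max (max N₁ N₂) 3 with hndef
  have hn3 : 3 ≤ n := le_max_right _ _
  have hn0' : (0:ℝ) < n := by
    have : (3:ℝ) ≤ n := by exact_mod_cast hn3
    linarith
  have h₁ := hN₁ n (le_trans (le_max_left _ _) (le_max_left _ _))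
  have h₂ := hN₂ n (le_trans (le_max_right _ _) (le_max_left _ _))
  -- the middle loops agree
  have hmid : (∑ k ∈ range n, arg (Λ₁ (1, ((k:ℝ)+1)/n) / Λ₁ (1, (k:ℝ)/n)))
      = ∑ k ∈ range n, arg (Λ₂ (1, ((k:ℝ)+1)/n) / Λ₂ (1, (k:ℝ)/n)) := by
    apply Finset.sum_congr rfl
    intro k _
    have e1 : ∀ x : ℝ, Λ₁ (1, x) = H (γ x) := by
      intro x; rw [hΛ₁def]; simp only [Complex.ofReal_one, one_mul]; ring
    have e2 : ∀ x : ℝ, Λ₂ (1, x) = H (γ x) := by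
      intro x; rw [hΛ₂def]; simp only [Complex.ofReal_one, one_mul]
    rw [e1, e1, e2, e2]
  -- the constant loop has winding 0
  have hconst : (∑ k ∈ range n, arg (Λ₂ (0, ((k:ℝ)+1)/n) / Λ₂ (0, (k:ℝ)/n))) = 0 := by
    apply Finset.sum_eq_zero
    intro k _
    have e0 : ∀ x : ℝ, Λ₂ (0, x) = H 0 := by
      intro x; rw [hΛ₂def]; simp only [Complex.ofReal_zero, zero_mul]
    rw [e0, e0, div_self (hcon 0), Complex.arg_one]
  -- the circle has winding 2π
  have hcircle : (∑ k ∈ range n, arg (Λ₁ (0, ((k:ℝ)+1)/n) / Λ₁ (0, (k:ℝ)/n)))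
      = 2 * Real.pi := by
    have e0 : ∀ x : ℝ, Λ₁ (0, x) = γ x := by
      intro x; rw [hΛ₁def]; simp only [Complex.ofReal_zero, zero_mul, add_zero]
    have hterm : ∀ k ∈ range n,
        arg (Λ₁ (0, ((k:ℝ)+1)/n) / Λ₁ (0, (k:ℝ)/n)) = 2 * Real.pi / n := by
      intro k _
      rw [e0, e0, hγdef]
      simp only []
      rw [mul_div_mul_left _ _ (by exact_mod_cast ne_of_gt hR : (R:ℂ) ≠ 0)]
      rw [← Complex.exp_sub]
      have hsub : ((2 * Real.pi * (((k:ℝ)+1)/n) : ℝ) : ℂ) * I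
          - ((2 * Real.pi * ((k:ℝ)/n) : ℝ) : ℂ) * I
          = ((2 * Real.pi / n : ℝ) : ℂ) * I := by
        push_cast
        field_simp
        ring
      rw [hsub, Complex.exp_mul_I]
      have h3n : (3:ℝ) ≤ n := by exact_mod_cast hn3
      have hpi := Real.pi_pos
      have hθ : (2 * Real.pi / n : ℝ) ∈ Set.Ioc (-Real.pi) Real.pi := by
        constructor
        · have : 0 < 2 * Real.pi / n := by positivity
          linarith
        · rw [div_le_iff₀ hn0']
          nlinarith
      exact Complex.arg_cos_add_sin_mul_I hθ
    rw [Finset.sum_congr rfl hterm, Finset.sum_const, Finset.card_range, nsmul_eq_mul]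
    field_simp
  rw [hcircle, hmid, ← h₂, hconst] at h₁
  have := Real.pi_pos
  linarith

lemma aux_periodic_bounded (φ : ℂ → ℂ) (hc : Continuous φ)
    (h1 : ∀ z, φ (z + 1) = φ z) (hI : ∀ z, φ (z + I) = φ z) :
    ∃ M : ℝ, ∀ z, ‖φ z‖ ≤ M := by
  have hint1 : ∀ (m : ℤ) (z : ℂ), φ (z + m) = φ z := by
    intro m
    induction m using Int.induction_on with
    | zero => simp
    | succ i ih =>
      intro z
      have : (z : ℂ) + ((i : ℤ) + 1 : ℤ) = (z + (i : ℤ)) + 1 := by push_cast; ring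
      rw [this, h1, ih]
    | pred i ih =>
      intro z
      have : φ (z + (-(i:ℤ) - 1 : ℤ)) = φ ((z + (-(i:ℤ) - 1 : ℤ)) + 1) := (h1 _).symm
      rw [this]
      have h2 : (z + (-(i:ℤ) - 1 : ℤ) : ℂ) + 1 = z + (-(i:ℤ) : ℤ) := by push_cast; ring
      rw [h2, ih]
  have hintI : ∀ (m : ℤ) (z : ℂ), φ (z + m * I) = φ z := by
    intro m
    induction m using Int.induction_on with
    | zero => simp
    | succ i ih =>
      intro z
      have : (z : ℂ) + ((i : ℤ) + 1 : ℤ) * I = (z + (i : ℤ) * I) + I := by push_cast; ring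
      rw [this, hI, ih]
    | pred i ih =>
      intro z
      have : φ (z + (-(i:ℤ) - 1 : ℤ) * I) = φ ((z + (-(i:ℤ) - 1 : ℤ) * I) + I) := (hI _).symm
      rw [this]
      have h2 : (z + (-(i:ℤ) - 1 : ℤ) * I : ℂ) + I = z + (-(i:ℤ) : ℤ) * I := by push_cast; ring
      rw [h2, ih]
  have hψc : Continuous (fun p : ℝ × ℝ => ‖φ ((p.1 : ℂ) + (p.2 : ℝ) * I)‖) := by
    apply continuous_norm.comp
    apply hc.comp
    exact (Complex.continuous_ofReal.comp continuous_fst).add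
      ((Complex.continuous_ofReal.comp continuous_snd).mul continuous_const)
  have hKc : IsCompact (Set.Icc (0:ℝ) 1 ×ˢ Set.Icc (0:ℝ) 1) := isCompact_Icc.prod isCompact_Icc
  have hKne : (Set.Icc (0:ℝ) 1 ×ˢ Set.Icc (0:ℝ) 1).Nonempty :=
    ⟨(0,0), by constructor <;> constructor <;> norm_num⟩
  obtain ⟨p₀, hp₀, hmax⟩ := hKc.exists_isMaxOn hKne hψc.continuousOn
  refine ⟨‖φ ((p₀.1 : ℂ) + (p₀.2 : ℝ) * I)‖, fun z => ?_⟩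
  have hz : z = (((Int.fract z.re : ℝ) + (Int.fract z.im : ℝ) * I) + (⌊z.re⌋ : ℤ))
      + (⌊z.im⌋ : ℤ) * I := by
    apply Complex.ext
    · simp [Complex.add_re, Complex.mul_re, Complex.I_re, Complex.I_im]
    · simp [Complex.add_im, Complex.mul_im, Complex.I_re, Complex.I_im]
  have e1 : φ z = φ ((Int.fract z.re : ℝ) + (Int.fract z.im : ℝ) * I) := by
    conv_lhs => rw [hz]
    rw [hintI ⌊z.im⌋ (((Int.fract z.re : ℝ) + (Int.fract z.im : ℝ) * I) + (⌊z.re⌋ : ℤ)),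
      hint1 ⌊z.re⌋ ((Int.fract z.re : ℝ) + (Int.fract z.im : ℝ) * I)]
  have hmem : ((Int.fract z.re, Int.fract z.im) : ℝ × ℝ)
      ∈ Set.Icc (0:ℝ) 1 ×ˢ Set.Icc (0:ℝ) 1 :=
    Set.mem_prod.mpr ⟨⟨Int.fract_nonneg _, (Int.fract_lt_one _).le⟩,
      ⟨Int.fract_nonneg _, (Int.fract_lt_one _).le⟩⟩
  have h2 := hmax hmem
  simp only [] at h2
  rw [e1]
  exact h2

end TorusIntersectionAux

/-- Let `v, w ∈ ℤ × ℤ` with `v₁·w₂ − v₂·w₁ ≠ 0`, and let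
`f, g : ℝ → ℝ × ℝ` be continuous with `f (s+1) = f s + v`, `g (t+1) = g t + w`
(lifts of loops on the torus `(ℝ/ℤ)²` in the classes `v` and `w`).  Then there
are `s, t : ℝ` with `f s - g t ∈ ℤ × ℤ`: loops on the torus with nonzero
homological intersection number must intersect. -/
theorem torus_loops_with_nonzero_intersection_number_intersect
    (v w : ℤ × ℤ) (hvw : v.1 * w.2 - v.2 * w.1 ≠ 0)
    (f g : ℝ → ℝ × ℝ) (hf : Continuous f) (hg : Continuous g)
    (hfper : ∀ s : ℝ, f (s + 1) = f s + ((v.1 : ℝ), (v.2 : ℝ)))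
    (hgper : ∀ t : ℝ, g (t + 1) = g t + ((w.1 : ℝ), (w.2 : ℝ))) :
    ∃ s t : ℝ, ∃ m n : ℤ, f s - g t = ((m : ℝ), (n : ℝ)) := by
  have hD : ((v.1 : ℝ) * (w.2 : ℝ) - (v.2 : ℝ) * (w.1 : ℝ)) ≠ 0 := by
    intro h
    apply hvw
    exact_mod_cast h
  set D : ℝ := (v.1 : ℝ) * (w.2 : ℝ) - (v.2 : ℝ) * (w.1 : ℝ) with hDdef
  -- the linear map sending v to 1 and -w to I
  have hPv : ∀ u : ℝ × ℝ,
      ((((w.2:ℝ) * (u + ((v.1:ℝ),(v.2:ℝ))).1 - (w.1:ℝ) * (u + ((v.1:ℝ),(v.2:ℝ))).2)/D : ℝ) : ℂ)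
        + (((v.2:ℝ) * (u + ((v.1:ℝ),(v.2:ℝ))).1 - (v.1:ℝ) * (u + ((v.1:ℝ),(v.2:ℝ))).2)/D : ℝ) * I
      = (((((w.2:ℝ) * u.1 - (w.1:ℝ) * u.2)/D : ℝ) : ℂ)
        + (((v.2:ℝ) * u.1 - (v.1:ℝ) * u.2)/D : ℝ) * I) + 1 := by
    intro u
    simp only [Prod.fst_add, Prod.snd_add]
    apply Complex.ext
    · simp only [Complex.add_re, Complex.ofReal_re, Complex.mul_re, Complex.I_re,
        Complex.I_im, Complex.ofReal_im, Complex.one_re, mul_zero, mul_one, zero_sub,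
        sub_zero, neg_zero, add_zero, zero_mul]
      field_simp
      ring
    · simp only [Complex.add_im, Complex.ofReal_im, Complex.mul_im, Complex.I_re,
        Complex.I_im, Complex.ofReal_re, Complex.one_im, mul_zero, mul_one, zero_add,
        add_zero, zero_mul]
      field_simp
      ring
  have hPw : ∀ u : ℝ × ℝ,
      ((((w.2:ℝ) * (u - ((w.1:ℝ),(w.2:ℝ))).1 - (w.1:ℝ) * (u - ((w.1:ℝ),(w.2:ℝ))).2)/D : ℝ) : ℂ)
        + (((v.2:ℝ) * (u - ((w.1:ℝ),(w.2:ℝ))).1 - (v.1:ℝ) * (u - ((w.1:ℝ),(w.2:ℝ))).2)/D : ℝ) * I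
      = (((((w.2:ℝ) * u.1 - (w.1:ℝ) * u.2)/D : ℝ) : ℂ)
        + (((v.2:ℝ) * u.1 - (v.1:ℝ) * u.2)/D : ℝ) * I) + I := by
    intro u
    simp only [Prod.fst_sub, Prod.snd_sub]
    apply Complex.ext
    · simp only [Complex.add_re, Complex.ofReal_re, Complex.mul_re, Complex.I_re,
        Complex.I_im, Complex.ofReal_im, mul_zero, mul_one, zero_sub,
        sub_zero, neg_zero, add_zero, zero_mul]
      field_simp
      ring
    · simp only [Complex.add_im, Complex.ofReal_im, Complex.mul_im, Complex.I_re,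
        Complex.I_im, Complex.ofReal_re, mul_zero, mul_one, zero_add,
        add_zero, zero_mul]
      field_simp
      ring
  -- the normalized map
  have hHc : Continuous (fun z : ℂ =>
      ((((w.2:ℝ) * (f z.re - g z.im).1 - (w.1:ℝ) * (f z.re - g z.im).2)/D : ℝ) : ℂ)
        + (((v.2:ℝ) * (f z.re - g z.im).1 - (v.1:ℝ) * (f z.re - g z.im).2)/D : ℝ) * I) := by
    have hF : Continuous (fun z : ℂ => f z.re - g z.im) :=
      (hf.comp Complex.continuous_re).sub (hg.comp Complex.continuous_im)
    have hF1 : Continuous (fun z : ℂ => (f z.re - g z.im).1) := continuous_fst.comp hF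
    have hF2 : Continuous (fun z : ℂ => (f z.re - g z.im).2) := continuous_snd.comp hF
    apply Continuous.add
    · exact Complex.continuous_ofReal.comp
        (((continuous_const.mul hF1).sub (continuous_const.mul hF2)).div_const D)
    · exact (Complex.continuous_ofReal.comp
        (((continuous_const.mul hF1).sub (continuous_const.mul hF2)).div_const D)).mul
        continuous_const
  set H : ℂ → ℂ := fun z =>
      ((((w.2:ℝ) * (f z.re - g z.im).1 - (w.1:ℝ) * (f z.re - g z.im).2)/D : ℝ) : ℂ)
        + (((v.2:ℝ) * (f z.re - g z.im).1 - (v.1:ℝ) * (f z.re - g z.im).2)/D : ℝ) * I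
    with hHdef
  have hkey1 : ∀ z : ℂ, H (z + 1) = H z + 1 := by
    intro z
    rw [hHdef]
    simp only [Complex.add_re, Complex.add_im, Complex.one_re, Complex.one_im, add_zero]
    rw [hfper z.re]
    rw [show f z.re + ((v.1:ℝ),(v.2:ℝ)) - g z.im
        = (f z.re - g z.im) + ((v.1:ℝ),(v.2:ℝ)) from add_sub_right_comm _ _ _]
    exact hPv _
  have hkeyI : ∀ z : ℂ, H (z + I) = H z + I := by
    intro z
    rw [hHdef]
    simp only [Complex.add_re, Complex.add_im, Complex.I_re, Complex.I_im, add_zero]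
    rw [hgper z.im]
    rw [show f z.re - (g z.im + ((w.1:ℝ),(w.2:ℝ)))
        = (f z.re - g z.im) - ((w.1:ℝ),(w.2:ℝ)) from sub_add_eq_sub_sub _ _ _]
    exact hPw _
  -- H - id is doubly periodic hence bounded
  obtain ⟨M, hM⟩ := aux_periodic_bounded (fun z => H z - z) (hHc.sub continuous_id)
    (by intro z; show H (z + 1) - (z + 1) = H z - z; rw [hkey1 z]; ring)
    (by intro z; show H (z + I) - (z + I) = H z - z; rw [hkeyI z]; ring)
  obtain ⟨z₀, hz₀⟩ := aux_hits_zero H hHc M hM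
  refine ⟨z₀.re, z₀.im, 0, 0, ?_⟩
  rw [hHdef] at hz₀
  simp only [] at hz₀
  have hre := congrArg Complex.re hz₀
  have him := congrArg Complex.im hz₀
  simp only [Complex.add_re, Complex.add_im, Complex.ofReal_re, Complex.ofReal_im,
    Complex.mul_re, Complex.mul_im, Complex.I_re, Complex.I_im, Complex.zero_re,
    Complex.zero_im, mul_zero, mul_one, zero_sub, zero_add, add_zero, neg_zero,
    zero_mul, sub_zero] at hre him
  set u1 : ℝ := (f z₀.re - g z₀.im).1
  set u2 : ℝ := (f z₀.re - g z₀.im).2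
  have h1 : (w.2:ℝ) * u1 - (w.1:ℝ) * u2 = 0 := by
    field_simp at hre
    linarith [hre]
  have h2 : (v.2:ℝ) * u1 - (v.1:ℝ) * u2 = 0 := by
    field_simp at him
    linarith [him]
  have hu1 : u1 = 0 := by
    have : D * u1 = (v.1:ℝ) * ((w.2:ℝ) * u1 - (w.1:ℝ) * u2)
        - (w.1:ℝ) * ((v.2:ℝ) * u1 - (v.1:ℝ) * u2) := by rw [hDdef]; ring
    rw [h1, h2] at this
    simp at this
    rcases this with h | h
    · exact absurd h hD
    · exact h
  have hu2 : u2 = 0 := by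
    have : D * u2 = (v.2:ℝ) * ((w.2:ℝ) * u1 - (w.1:ℝ) * u2)
        - (w.2:ℝ) * ((v.2:ℝ) * u1 - (v.1:ℝ) * u2) := by rw [hDdef]; ring
    rw [h1, h2] at this
    simp at this
    rcases this with h | h
    · exact absurd h hD
    · exact h
  apply Prod.ext
  · simpa [u1] using hu1
  · simpa [u2] using hu2
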